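/- Let 0 < p ≤ 1 and t ≥ 0. Let W : ℕ → ℝ → ℝ satisfy W_0(x) = 1 for all x ∈ [0,1], and for every n ≥ 1 and x ∈ [0,1], W_n(x) = (1 − p·x)·e^{−t·x}·W_{n−1}(x) + p·∫_0^x e^{−t·y}·W_{n−1}(y) dy. For x ∈ [0,1] and k ≥ 1 define c_k(x) = p·∫_0^x e^{−t·k·s}·(1 − p·s)^{k−1} ds, and define V : ℕ → ℝ → ℝ by V_0(x) = 1 and the recursion (i+1)·V_{i+1}(x) = Σ_{k=1}^{i+1} k·c_k(x)·V_{i+1−k}(x) for i ≥ 0 (so that formally Σ_{i≥0} V_i(x)·z^i = exp(Σ_{k≥1} c_k(x)·z^k)). Then for every n ≥ 0 and x ∈ [0,1], W_n(x) = Σ_{i=0}^{n} (1 − p·x)^{n−i} · e^{−t·(n−i)·x} · V_i(x). -/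

import Mathlib

open MeasureTheory intervalIntegral

noncomputable def dd (p t : ℝ) (k : ℕ) (x : ℝ) : ℝ :=
  p * Real.exp (-t * k * x) * (1 - p * x) ^ (k - 1)

noncomputable def TT (p t : ℝ) : ℕ → ℝ → ℝ
  | 0, _ => 1
  | (n+1), x => ∑ i : Fin (n+1), ∫ y in (0:ℝ)..x, dd p t (n+1-(i:ℕ)) y * TT p t i y

noncomputable def cF (p t : ℝ) (k : ℕ) (x : ℝ) : ℝ :=
  p * ∫ s in (0:ℝ)..x, Real.exp (-t * k * s) * (1 - p * s) ^ (k - 1)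

lemma dd_cont (p t : ℝ) (k : ℕ) : Continuous (dd p t k) := by
  unfold dd; fun_prop

lemma TT_succ (p t : ℝ) (n : ℕ) (x : ℝ) :
    TT p t (n+1) x = ∑ i ∈ Finset.range (n+1), ∫ y in (0:ℝ)..x, dd p t (n+1-i) y * TT p t i y := by
  rw [TT]
  exact Fin.sum_univ_eq_sum_range
    (fun j => ∫ y in (0:ℝ)..x, dd p t (n+1-j) y * TT p t j y) (n+1)

lemma range_to_Icc {M : Type*} [AddCommMonoid M] (n : ℕ) (f : ℕ → ℕ → M) :
    ∑ i ∈ Finset.range n, f (n - i) i = ∑ k ∈ Finset.Icc 1 n, f k (n - k) := by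
  refine Finset.sum_nbij' (fun i => n - i) (fun k => n - k) ?_ ?_ ?_ ?_ ?_ <;>
      simp only [Finset.mem_range, Finset.mem_Icc] <;> intro a ha
  · omega
  · omega
  · omega
  · omega
  · congr 1; omega

lemma TT_hasDerivAt (p t : ℝ) :
    ∀ n, ∀ x, HasDerivAt (TT p t n)
      (∑ i ∈ Finset.range n, dd p t (n - i) x * TT p t i x) x := by
  intro n
  induction n using Nat.strong_induction_on with
  | _ n IH =>
    match n with
    | 0 =>
      intro x
      simp only [Finset.range_zero, Finset.sum_empty]
      have h0 : TT p t 0 = fun _ => (1:ℝ) := by funext y; rw [TT]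
      rw [h0]
      exact hasDerivAt_const x 1
    | (m+1) =>
      intro x
      have key : ∀ i ∈ Finset.range (m+1),
          HasDerivAt (fun u => ∫ y in (0:ℝ)..u, dd p t (m+1-i) y * TT p t i y)
            (dd p t (m+1-i) x * TT p t i x) x := by
        intro i hi
        have hTc : Continuous (TT p t i) := by
          have hd : Differentiable ℝ (TT p t i) :=
            fun y => (IH i (Finset.mem_range.mp hi) y).differentiableAt
          exact hd.continuous
        exact (((dd_cont p t (m+1-i)).mul hTc).integral_hasStrictDerivAt 0 x).hasDerivAt
      have := HasDerivAt.fun_sum key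
      have heq : TT p t (m+1) =
          fun u => ∑ i ∈ Finset.range (m+1), ∫ y in (0:ℝ)..u, dd p t (m+1-i) y * TT p t i y := by
        funext u; exact TT_succ p t m u
      rw [heq]
      exact this

lemma TT_cont (p t : ℝ) (n : ℕ) : Continuous (TT p t n) := by
  have : Differentiable ℝ (TT p t n) := fun y => (TT_hasDerivAt p t n y).differentiableAt
  exact this.continuous

lemma TT_zero_at_zero (p t : ℝ) (n : ℕ) : TT p t (n+1) 0 = 0 := by
  rw [TT_succ]
  simp [intervalIntegral.integral_same]

lemma cF_hasDerivAt (p t : ℝ) (k : ℕ) (x : ℝ) :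
    HasDerivAt (cF p t k) (dd p t k x) x := by
  have hc : Continuous (fun s : ℝ => Real.exp (-t * k * s) * (1 - p * s) ^ (k - 1)) := by
    fun_prop
  have := (hc.integral_hasStrictDerivAt 0 x).hasDerivAt.const_mul p
  have heq : cF p t k = fun y => p * ∫ s in (0:ℝ)..y, Real.exp (-t * k * s) * (1 - p * s) ^ (k - 1) := by
    funext y; rfl
  rw [heq]
  simpa [dd, mul_assoc, neg_mul] using this

lemma cF_zero_at_zero (p t : ℝ) (k : ℕ) : cF p t k 0 = 0 := by
  simp [cF, intervalIntegral.integral_same]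

lemma swap_sum {M : Type*} [AddCommMonoid M] (m : ℕ) (f : ℕ → ℕ → M) :
    ∑ k ∈ Finset.Icc 1 m, ∑ j ∈ Finset.Icc 1 (m-k), f k j
      = ∑ j ∈ Finset.Icc 1 (m-1), ∑ k ∈ Finset.Icc 1 (m-j), f k j := by
  rw [Finset.sum_sigma', Finset.sum_sigma']
  refine Finset.sum_nbij' (fun x => ⟨x.2, x.1⟩) (fun x => ⟨x.2, x.1⟩) ?_ ?_ ?_ ?_ ?_ <;>
    simp only [Finset.mem_sigma, Finset.mem_Icc, Sigma.forall] <;>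
    (try rintro a b ⟨⟨h1, h2⟩, h3, h4⟩) <;> first | omega | rfl | trivial

lemma key_identity (p t : ℝ) :
    ∀ m : ℕ, ∀ x : ℝ, ((m:ℝ)+1) * TT p t (m+1) x
      = ∑ k ∈ Finset.Icc 1 (m+1), (k:ℝ) * cF p t k x * TT p t (m+1-k) x := by
  intro m
  induction m using Nat.strong_induction_on with
  | _ m IH =>
    have hder : ∀ x : ℝ, HasDerivAt
        (fun y => ((m:ℝ)+1) * TT p t (m+1) y
          - ∑ k ∈ Finset.Icc 1 (m+1), (k:ℝ) * cF p t k y * TT p t (m+1-k) y) 0 x := by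
      intro x
      have hf : HasDerivAt (fun y => ((m:ℝ)+1) * TT p t (m+1) y)
          (((m:ℝ)+1) * ∑ i ∈ Finset.range (m+1), dd p t (m+1-i) x * TT p t i x) x :=
        (TT_hasDerivAt p t (m+1) x).const_mul _
      have hg : HasDerivAt
          (fun y => ∑ k ∈ Finset.Icc 1 (m+1), (k:ℝ) * cF p t k y * TT p t (m+1-k) y)
          (∑ k ∈ Finset.Icc 1 (m+1),
            (((k:ℝ) * dd p t k x) * TT p t (m+1-k) x
              + ((k:ℝ) * cF p t k x)
                * ∑ i ∈ Finset.range (m+1-k), dd p t (m+1-k-i) x * TT p t i x)) x := by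
        apply HasDerivAt.fun_sum
        intro k _
        exact ((cF_hasDerivAt p t k x).const_mul (k:ℝ)).mul (TT_hasDerivAt p t (m+1-k) x)
      have hsub := hf.fun_sub hg
      refine hsub.congr_deriv (Eq.symm ?_)
      symm
      rw [sub_eq_zero]
      -- now prove the derivative values are equal
      have hD : ∀ n : ℕ, (∑ i ∈ Finset.range n, dd p t (n-i) x * TT p t i x)
          = ∑ k ∈ Finset.Icc 1 n, dd p t k x * TT p t (n-k) x :=
        fun n => range_to_Icc n (fun a b => dd p t a x * TT p t b x)
      rw [hD]
      have hinner : ∀ k, (∑ i ∈ Finset.range (m+1-k), dd p t (m+1-k-i) x * TT p t i x)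
          = ∑ j ∈ Finset.Icc 1 (m+1-k), dd p t j x * TT p t (m+1-k-j) x := fun k => hD _
      simp only [hinner]
      rw [Finset.sum_add_distrib]
      -- handle the double sum
      have hS2 : (∑ k ∈ Finset.Icc 1 (m+1), ((k:ℝ) * cF p t k x)
            * ∑ j ∈ Finset.Icc 1 (m+1-k), dd p t j x * TT p t (m+1-k-j) x)
          = ∑ j ∈ Finset.Icc 1 m, ((m:ℝ)+1-(j:ℝ)) * (dd p t j x * TT p t (m+1-j) x) := by
        have h1 : (∑ k ∈ Finset.Icc 1 (m+1), ((k:ℝ) * cF p t k x)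
              * ∑ j ∈ Finset.Icc 1 (m+1-k), dd p t j x * TT p t (m+1-k-j) x)
            = ∑ k ∈ Finset.Icc 1 (m+1), ∑ j ∈ Finset.Icc 1 (m+1-k),
                ((k:ℝ) * cF p t k x) * (dd p t j x * TT p t (m+1-k-j) x) := by
          apply Finset.sum_congr rfl
          intro k _
          rw [Finset.mul_sum]
        rw [h1]
        have h2 := swap_sum (m+1)
          (fun k j => ((k:ℝ) * cF p t k x) * (dd p t j x * TT p t (m+1-k-j) x))
        simp only [Nat.add_sub_cancel] at h2
        rw [h2]
        apply Finset.sum_congr rfl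
        intro j hj
        obtain ⟨hj1, hj2⟩ := Finset.mem_Icc.mp hj
        have hj' : m + 1 - j = (m - j) + 1 := by omega
        have step : (∑ k ∈ Finset.Icc 1 (m+1-j),
              ((k:ℝ) * cF p t k x) * (dd p t j x * TT p t (m+1-k-j) x))
            = dd p t j x * ∑ k ∈ Finset.Icc 1 ((m-j)+1),
                ((k:ℝ) * cF p t k x) * TT p t ((m-j)+1-k) x := by
          rw [hj', Finset.mul_sum]
          apply Finset.sum_congr rfl
          intro k hk
          have : m + 1 - k - j = (m - j) + 1 - k := by
            obtain ⟨hk1, hk2⟩ := Finset.mem_Icc.mp hk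
            omega
          rw [this]; ring
        rw [step]
        have hIH := IH (m - j) (by omega) x
        simp only [mul_assoc] at hIH ⊢
        rw [← hIH]
        have hcast : (((m-j : ℕ):ℝ)+1) = (m:ℝ)+1-(j:ℝ) := by
          push_cast [hj2]; ring
        rw [hj']
        rw [← hcast]
        ring
      rw [hS2]
      -- extend second sum to Icc 1 (m+1)
      have hext : (∑ j ∈ Finset.Icc 1 m, ((m:ℝ)+1-(j:ℝ)) * (dd p t j x * TT p t (m+1-j) x))
          = ∑ j ∈ Finset.Icc 1 (m+1), ((m:ℝ)+1-(j:ℝ)) * (dd p t j x * TT p t (m+1-j) x) := by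
        rw [Finset.sum_Icc_succ_top (by omega : 1 ≤ m + 1)]
        have : ((m:ℝ)+1-((m+1:ℕ):ℝ)) = 0 := by push_cast; ring
        rw [this]
        ring
      rw [hext, Finset.mul_sum, ← Finset.sum_add_distrib]
      apply Finset.sum_congr rfl
      intro k _
      ring
    -- conclude equality from derivative 0 and value at 0
    intro x
    set h : ℝ → ℝ := fun y => ((m:ℝ)+1) * TT p t (m+1) y
      - ∑ k ∈ Finset.Icc 1 (m+1), (k:ℝ) * cF p t k y * TT p t (m+1-k) y with hh
    have hdiff : Differentiable ℝ h := fun y => (hder y).differentiableAt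
    have hconst : h x = h 0 :=
      is_const_of_deriv_eq_zero hdiff (fun y => (hder y).deriv) x 0
    have h0 : h 0 = 0 := by
      simp only [hh, TT_zero_at_zero, cF_zero_at_zero, mul_zero, zero_mul, mul_zero]
      simp
    have := hconst.trans h0
    simp only [hh, sub_eq_zero] at this
    exact this

lemma V_eq_TT (p t : ℝ) (c : ℕ → ℝ → ℝ)
    (hc : ∀ k : ℕ, 1 ≤ k → ∀ x ∈ Set.Icc (0 : ℝ) 1,
      c k x = p * ∫ s in (0 : ℝ)..x, Real.exp (-t * k * s) * (1 - p * s) ^ (k - 1))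
    (V : ℕ → ℝ → ℝ) (hV0 : ∀ x ∈ Set.Icc (0 : ℝ) 1, V 0 x = 1)
    (hVrec : ∀ i : ℕ, ∀ x ∈ Set.Icc (0 : ℝ) 1,
      ((i : ℝ) + 1) * V (i + 1) x
        = ∑ k ∈ Finset.Icc 1 (i + 1), (k : ℝ) * c k x * V (i + 1 - k) x) :
    ∀ i : ℕ, ∀ x ∈ Set.Icc (0 : ℝ) 1, V i x = TT p t i x := by
  intro i
  induction i using Nat.strong_induction_on with
  | _ i IH =>
    match i with
    | 0 =>
      intro x hx
      rw [hV0 x hx, TT]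
    | (j+1) =>
      intro x hx
      have h1 := hVrec j x hx
      have h2 : ∀ k ∈ Finset.Icc 1 (j+1),
          (k:ℝ) * c k x * V (j + 1 - k) x = (k:ℝ) * cF p t k x * TT p t (j+1-k) x := by
        intro k hk
        obtain ⟨hk1, hk2⟩ := Finset.mem_Icc.mp hk
        rw [hc k hk1 x hx, IH (j+1-k) (by omega) x hx]
        rfl
      rw [Finset.sum_congr rfl h2] at h1
      rw [← key_identity p t j x] at h1
      have hne : ((j:ℝ) + 1) ≠ 0 := by positivity
      exact mul_left_cancel₀ hne h1

theorem stmt9 (p t : ℝ) (hp : 0 < p) (hp1 : p ≤ 1) (ht : 0 ≤ t)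
    (W : ℕ → ℝ → ℝ) (hW0 : ∀ x ∈ Set.Icc (0 : ℝ) 1, W 0 x = 1)
    (hWrec : ∀ n : ℕ, ∀ x ∈ Set.Icc (0 : ℝ) 1,
      W (n + 1) x = (1 - p * x) * Real.exp (-t * x) * W n x
        + p * ∫ y in (0 : ℝ)..x, Real.exp (-t * y) * W n y)
    (c : ℕ → ℝ → ℝ)
    (hc : ∀ k : ℕ, 1 ≤ k → ∀ x ∈ Set.Icc (0 : ℝ) 1,
      c k x = p * ∫ s in (0 : ℝ)..x, Real.exp (-t * k * s) * (1 - p * s) ^ (k - 1))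
    (V : ℕ → ℝ → ℝ) (hV0 : ∀ x ∈ Set.Icc (0 : ℝ) 1, V 0 x = 1)
    (hVrec : ∀ i : ℕ, ∀ x ∈ Set.Icc (0 : ℝ) 1,
      ((i : ℝ) + 1) * V (i + 1) x
        = ∑ k ∈ Finset.Icc 1 (i + 1), (k : ℝ) * c k x * V (i + 1 - k) x) :
    ∀ n : ℕ, ∀ x ∈ Set.Icc (0 : ℝ) 1,
      W n x = ∑ i ∈ Finset.range (n + 1),
        (1 - p * x) ^ (n - i) * Real.exp (-t * ((n : ℝ) - (i : ℝ)) * x) * V i x := by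
  have hVT := V_eq_TT p t c hc V hV0 hVrec
  intro n
  induction n with
  | zero =>
    intro x hx
    rw [hW0 x hx]
    simp only [zero_add, Finset.sum_range_one, Nat.cast_zero, Nat.zero_sub, Nat.sub_zero]
    rw [hV0 x hx]
    norm_num
  | succ n IH =>
    intro x hx
    obtain ⟨hx0, hx1⟩ := hx
    have hxI : x ∈ Set.Icc (0:ℝ) 1 := ⟨hx0, hx1⟩
    rw [hWrec n x hxI]
    set G : ℝ → ℝ := fun y => ∑ i ∈ Finset.range (n + 1),
        (1 - p * y) ^ (n - i) * Real.exp (-t * ((n : ℝ) - (i : ℝ)) * y) * TT p t i y with hG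
    have hcong : (∫ y in (0:ℝ)..x, Real.exp (-t * y) * W n y)
        = ∫ y in (0:ℝ)..x, Real.exp (-t * y) * G y := by
      apply intervalIntegral.integral_congr
      intro y hy
      have hy' : y ∈ Set.Icc 0 x := by rwa [Set.uIcc_of_le hx0] at hy
      have hyI : y ∈ Set.Icc (0:ℝ) 1 := ⟨hy'.1, hy'.2.trans hx1⟩
      show Real.exp (-t * y) * W n y = Real.exp (-t * y) * G y
      rw [IH y hyI, hG]
      congr 1
      apply Finset.sum_congr rfl
      intro i _
      rw [hVT i y hyI]
    rw [hcong]
    have hint : p * (∫ y in (0:ℝ)..x, Real.exp (-t * y) * G y) = TT p t (n+1) x := by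
      rw [← intervalIntegral.integral_const_mul]
      have hptw : ∀ y : ℝ, p * (Real.exp (-t * y) * G y)
          = ∑ i ∈ Finset.range (n+1), dd p t (n+1-i) y * TT p t i y := by
        intro y
        simp only [hG, Finset.mul_sum]
        apply Finset.sum_congr rfl
        intro i hi
        have hin : i ≤ n := by
          have := Finset.mem_range.mp hi; omega
        have h1 : (n + 1 - i) - 1 = n - i := by omega
        have h2 : ((n + 1 - i : ℕ) : ℝ) = (n:ℝ) + 1 - (i:ℝ) := by
          rw [Nat.cast_sub (by omega)]
          push_cast
          ring
        unfold dd
        rw [h1, h2]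
        rw [show -t * ((n:ℝ) + 1 - (i:ℝ)) * y = -t * y + -t * ((n:ℝ) - (i:ℝ)) * y by ring,
          Real.exp_add]
        ring
      have heqf : (fun y => p * (Real.exp (-t * y) * G y))
          = fun y => ∑ i ∈ Finset.range (n+1), dd p t (n+1-i) y * TT p t i y := funext hptw
      rw [heqf]
      rw [intervalIntegral.integral_finset_sum]
      · exact (TT_succ p t n x).symm
      · intro i _
        exact ((dd_cont p t (n+1-i)).mul (TT_cont p t i)).intervalIntegrable 0 x
    rw [hint]
    rw [IH x hxI]
    conv_rhs => rw [Finset.sum_range_succ]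
    have hlast : (1 - p * x) ^ (n + 1 - (n+1))
        * Real.exp (-t * (((n+1:ℕ):ℝ) - ((n+1:ℕ):ℝ)) * x) * V (n+1) x = TT p t (n+1) x := by
      rw [hVT (n+1) x hxI]
      simp
    rw [hlast]
    congr 1
    rw [Finset.mul_sum]
    apply Finset.sum_congr rfl
    intro i hi
    have hin : i ≤ n := by
      have := Finset.mem_range.mp hi; omega
    have hpow : n + 1 - i = (n - i) + 1 := by omega
    rw [hpow, pow_succ]
    push_cast
    rw [show -t * ((n:ℝ) + 1 - (i:ℝ)) * x = -t * x + -t * ((n:ℝ) - (i:ℝ)) * x by ring,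
      Real.exp_add]
    ring
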